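/- Fix s > 0 and θ, θ* > 0. Let X, Y, B be independent random variables where X has the Gamma distribution with shape 2s and scale θ (density γ_{θ}(x) = x^{2s−1} e^{−x/θ}/(θ^{2s} Γ(2s)) on (0,∞)), Y has the Gamma distribution with shape 2s and scale θ*, and B has the Beta(2s,2s) distribution. Then the law of B·(X+Y) equals the Beta(2s,2s)-mixture of Gamma distributions: for every Borel set A ⊆ [0,∞), P(B(X+Y) ∈ A) = ∫₀¹ (∫_A γ_{(1−u)θ + u θ*}(x) dx) β_s(u) du. (This is the intertwining of the continuous generalized KMP reservoir generator with the hidden-parameter reservoir generator via the Gamma kernel.) -/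

import Mathlib

open MeasureTheory Real Set
open scoped ENNReal

/-- The Gamma(shape 2s, scale θ) density on (0,∞). -/
noncomputable def gammaDens (s θ x : ℝ) : ℝ :=
  x ^ (2 * s - 1) * Real.exp (-x / θ) / (θ ^ (2 * s) * Real.Gamma (2 * s))

/-- The Gamma(shape 2s, scale θ) distribution as a measure on ℝ. -/
noncomputable def gammaMeas (s θ : ℝ) : Measure ℝ :=
  (volume.restrict (Set.Ioi (0 : ℝ))).withDensity (fun x => ENNReal.ofReal (gammaDens s θ x))

/-- The Beta(2s,2s) density on (0,1). -/
noncomputable def betaDens (s u : ℝ) : ℝ :=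
  u ^ (2 * s - 1) * (1 - u) ^ (2 * s - 1) /
    ∫ v in Set.Ioo (0 : ℝ) 1, v ^ (2 * s - 1) * (1 - v) ^ (2 * s - 1)

/-- The Beta(2s,2s) distribution as a measure on ℝ. -/
noncomputable def betaMeas (s : ℝ) : Measure ℝ :=
  (volume.restrict (Set.Ioo (0 : ℝ) 1)).withDensity (fun u => ENNReal.ofReal (betaDens s u))

/-- 1D change of variables for Lebesgue integrals of `ℝ≥0∞`-valued functions. -/
theorem cov1D {s : Set ℝ} {f f' : ℝ → ℝ}
    (hs : MeasurableSet s) (hf' : ∀ x ∈ s, HasDerivWithinAt f (f' x) s x)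
    (hf : Set.InjOn f s) (g : ℝ → ℝ≥0∞) :
    ∫⁻ x in f '' s, g x = ∫⁻ x in s, ENNReal.ofReal |f' x| * g (f x) := by
  simpa only [ContinuousLinearMap.det_toSpanSingleton] using
    MeasureTheory.lintegral_image_eq_lintegral_abs_det_fderiv_mul volume hs
      (fun x hx => (hf' x hx).hasFDerivWithinAt) hf g

theorem rpow_succ' {x : ℝ} (hx : x ≠ 0) (p : ℝ) : x ^ p = x ^ (p-1) * x := by
  conv_lhs => rw [show p = (p-1)+1 by ring]
  rw [Real.rpow_add_one hx]

theorem gamma_int {p δ : ℝ} (hp : 0 < p) (hδ : 0 < δ) :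
    ∫⁻ r in Ioi (0:ℝ), ENNReal.ofReal (r ^ (p-1) * Real.exp (-(δ * r)))
      = ENNReal.ofReal (Real.Gamma p / δ ^ p) := by
  have hΓ : 0 < Real.Gamma p := Real.Gamma_pos_of_pos hp
  have hc : 0 < δ ^ p / Real.Gamma p := by positivity
  have h1 := ProbabilityTheory.lintegral_gammaPDF_eq_one hp hδ
  have hsplit : ∫⁻ x, ProbabilityTheory.gammaPDF p δ x
      = ∫⁻ x in Ioi (0:ℝ), ProbabilityTheory.gammaPDF p δ x := by
    rw [← lintegral_add_compl _ (measurableSet_Ioi (a := (0:ℝ)))]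
    have h0 : ∫⁻ x in (Ioi (0:ℝ))ᶜ, ProbabilityTheory.gammaPDF p δ x = 0 := by
      rw [compl_Ioi]
      rw [show (Iic (0:ℝ)) = Iio 0 ∪ {0} by
        ext x; simp [le_iff_lt_or_eq]]
      rw [lintegral_union (measurableSet_singleton 0) (by
        simp only [disjoint_left, mem_Iio, mem_singleton_iff]; intro a ha; exact ne_of_lt ha)]
      have : ∫⁻ x in Iio (0:ℝ), ProbabilityTheory.gammaPDF p δ x = 0 := by
        rw [setLIntegral_congr_fun measurableSet_Iio
          ((fun x (hx : x < 0) => ProbabilityTheory.gammaPDF_of_neg hx))]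
        simp
      rw [this, lintegral_singleton]
      simp
    rw [h0, add_zero]
  rw [hsplit] at h1
  have h2 : ∫⁻ x in Ioi (0:ℝ), ProbabilityTheory.gammaPDF p δ x
      = ENNReal.ofReal (δ ^ p / Real.Gamma p)
        * ∫⁻ r in Ioi (0:ℝ), ENNReal.ofReal (r ^ (p-1) * Real.exp (-(δ * r))) := by
    rw [← lintegral_const_mul' _ _ ENNReal.ofReal_ne_top]
    refine setLIntegral_congr_fun measurableSet_Ioi (fun x hx => ?_)
    rw [ProbabilityTheory.gammaPDF, ProbabilityTheory.gammaPDFReal, if_pos (le_of_lt hx),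
      ← ENNReal.ofReal_mul (le_of_lt hc)]
    ring_nf
  rw [h2] at h1
  have hne : ENNReal.ofReal (δ ^ p / Real.Gamma p) ≠ 0 := by
    simp [ENNReal.ofReal_eq_zero, not_le, hc]
  calc ∫⁻ r in Ioi (0:ℝ), ENNReal.ofReal (r ^ (p-1) * Real.exp (-(δ * r)))
      = (ENNReal.ofReal (δ ^ p / Real.Gamma p))⁻¹
        * (ENNReal.ofReal (δ ^ p / Real.Gamma p)
          * ∫⁻ r in Ioi (0:ℝ), ENNReal.ofReal (r ^ (p-1) * Real.exp (-(δ * r)))) := by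
        rw [← mul_assoc, ENNReal.inv_mul_cancel hne ENNReal.ofReal_ne_top, one_mul]
    _ = (ENNReal.ofReal (δ ^ p / Real.Gamma p))⁻¹ := by rw [h1, mul_one]
    _ = ENNReal.ofReal (Real.Gamma p / δ ^ p) := by
        rw [← ENNReal.ofReal_inv_of_pos hc, inv_div]

theorem lint_ind {A : Set ℝ} (hA : MeasurableSet A) (hA' : A ⊆ Ici 0) (H : ℝ → ℝ≥0∞) :
    ∫⁻ z in Ioi (0:ℝ), H z * A.indicator 1 z = ∫⁻ z in A, H z := by
  have h1 : ∀ z, H z * A.indicator 1 z = A.indicator H z := by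
    intro z
    by_cases hz : z ∈ A <;> simp [Set.indicator_apply, hz]
  simp only [h1]
  rw [← lintegral_indicator measurableSet_Ioi, Set.indicator_indicator,
    lintegral_indicator (measurableSet_Ioi.inter hA)]
  have he : (Ioi 0 ∩ A : Set ℝ) =ᵐ[volume] A := by
    rw [Filter.eventuallyEq_set, ae_iff]
    refine measure_mono_null (fun z hz => ?_) (measure_singleton (0:ℝ))
    simp only [mem_setOf_eq, mem_inter_iff, mem_Ioi] at hz
    by_cases hzA : z ∈ A
    · have h0 : (0:ℝ) ≤ z := hA' hzA
      have : ¬ (0 < z) := fun h => hz ⟨fun _ => hzA, fun _ => ⟨h, hzA⟩⟩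
      simpa using le_antisymm (not_lt.1 this) h0
    · exact absurd (by tauto) hz
  rw [Measure.restrict_congr_set he]

theorem inner_bt (p : ℝ) (hp : 0 < p) (δ : ℝ) (hδ : 0 < δ)
    (A : Set ℝ) (hA : MeasurableSet A) (hA' : A ⊆ Ici 0) :
    (∫⁻ t in Ioi (0:ℝ), ENNReal.ofReal (t ^ (2*p-1) * Real.exp (-(t*δ))) *
        ∫⁻ b in Ioo (0:ℝ) 1, ENNReal.ofReal (b^(p-1) * (1-b)^(p-1)) * A.indicator 1 (b*t))
      = ENNReal.ofReal (Real.Gamma p / δ^p)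
          * ∫⁻ z in A, ENNReal.ofReal (z^(p-1) * Real.exp (-(z*δ))) := by
  set K : ℝ → ℝ≥0∞ := fun t => ENNReal.ofReal (t ^ (2*p-1) * Real.exp (-(t*δ))) with hK
  set eβ : ℝ → ℝ≥0∞ := fun b => ENNReal.ofReal (b^(p-1) * (1-b)^(p-1)) with heβ
  have hKm : Measurable K := by rw [hK]; fun_prop
  have hβm : Measurable eβ := by rw [heβ]; fun_prop
  have hIm : Measurable (fun c : ℝ => A.indicator (1 : ℝ → ℝ≥0∞) c) :=
    (measurable_one : Measurable (1 : ℝ → ℝ≥0∞)).indicator hA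
  calc (∫⁻ t in Ioi (0:ℝ), K t * ∫⁻ b in Ioo (0:ℝ) 1, eβ b * A.indicator 1 (b*t))
      = ∫⁻ t in Ioi (0:ℝ), ∫⁻ b in Ioo (0:ℝ) 1, K t * (eβ b * A.indicator 1 (b*t)) := by
        refine lintegral_congr fun t => ?_
        rw [lintegral_const_mul' _ _ ENNReal.ofReal_ne_top]
    _ = ∫⁻ b in Ioo (0:ℝ) 1, ∫⁻ t in Ioi (0:ℝ), K t * (eβ b * A.indicator 1 (b*t)) := by
        refine lintegral_lintegral_swap ?_
        apply Measurable.aemeasurable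
        refine (hKm.comp measurable_fst).mul ((hβm.comp measurable_snd).mul ?_)
        exact hIm.comp' (measurable_snd.mul measurable_fst)
    _ = ∫⁻ b in Ioo (0:ℝ) 1, eβ b * ∫⁻ t in Ioi (0:ℝ), K t * A.indicator 1 (b*t) := by
        refine lintegral_congr fun b => ?_
        rw [← lintegral_const_mul' _ _ (ENNReal.ofReal_ne_top : eβ b ≠ ⊤)]
        exact lintegral_congr fun t => by ring
    _ = ∫⁻ b in Ioo (0:ℝ) 1, eβ b * ∫⁻ z in A, ENNReal.ofReal b⁻¹ * K (b⁻¹ * z) := by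
        refine setLIntegral_congr_fun measurableSet_Ioo (fun b hb => ?_)
        congr 1
        have hb0 : 0 < b := hb.1
        have himg : (fun z : ℝ => b⁻¹ * z) '' (Ioi 0) = Ioi 0 := by
          ext z
          constructor
          · rintro ⟨w, hw, rfl⟩; exact mul_pos (inv_pos.2 hb0) hw
          · intro hz; exact ⟨b * z, mul_pos hb0 hz, by field_simp⟩
        have hder : ∀ t ∈ Ioi (0:ℝ),
            HasDerivWithinAt (fun z : ℝ => b⁻¹ * z) b⁻¹ (Ioi 0) t := fun t _ => by
          simpa using (HasDerivAt.const_mul b⁻¹ (hasDerivAt_id t)).hasDerivWithinAt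
        have hinj : Set.InjOn (fun z : ℝ => b⁻¹ * z) (Ioi 0) := fun z1 _ z2 _ h =>
          mul_left_cancel₀ (inv_ne_zero hb0.ne') h
        conv_lhs => rw [← himg]
        rw [cov1D measurableSet_Ioi hder hinj]
        have hstep : ∀ z ∈ Ioi (0:ℝ),
            ENNReal.ofReal |b⁻¹| * (K (b⁻¹ * z) * A.indicator 1 (b * (b⁻¹ * z)))
              = (ENNReal.ofReal b⁻¹ * K (b⁻¹ * z)) * A.indicator 1 z := by
          intro z _
          rw [abs_of_pos (inv_pos.2 hb0), show b * (b⁻¹ * z) = z by field_simp, mul_assoc]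
        rw [setLIntegral_congr_fun measurableSet_Ioi (hstep)]
        exact lint_ind hA hA' _
    _ = ∫⁻ z in A, ∫⁻ b in Ioo (0:ℝ) 1, eβ b * (ENNReal.ofReal b⁻¹ * K (b⁻¹ * z)) := by
        trans (∫⁻ b in Ioo (0:ℝ) 1, ∫⁻ z in A, eβ b * (ENNReal.ofReal b⁻¹ * K (b⁻¹ * z)))
        · exact lintegral_congr fun b => (lintegral_const_mul' _ _
            (ENNReal.ofReal_ne_top : eβ b ≠ ⊤)).symm
        refine lintegral_lintegral_swap ?_
        apply Measurable.aemeasurable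
        refine (hβm.comp measurable_fst).mul (Measurable.fun_mul ?_ ?_)
        · exact (measurable_fst.inv).ennreal_ofReal
        · exact hKm.comp' (measurable_fst.inv.mul measurable_snd)
    _ = ∫⁻ z in A, ENNReal.ofReal (Real.Gamma p / δ^p)
          * ENNReal.ofReal (z^(p-1) * Real.exp (-(z*δ))) := by
        refine lintegral_congr_ae ?_
        have hzae : ∀ᵐ z ∂(volume.restrict A), (0:ℝ) < z := by
          rw [ae_restrict_iff' hA, ae_iff]
          refine measure_mono_null (fun z h => ?_) (measure_singleton (0:ℝ))
          push_neg at h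
          exact le_antisymm h.2 (hA' h.1)
        filter_upwards [hzae] with z hz0
        have hz0' : z ≠ 0 := ne_of_gt hz0
        have himg2 : (fun t : ℝ => z * t⁻¹) '' (Ioi z) = Ioo 0 1 := by
          ext u
          simp only [mem_image, mem_Ioi, mem_Ioo]
          constructor
          · rintro ⟨t, htz, rfl⟩
            have ht0 : 0 < t := hz0.trans htz
            refine ⟨by positivity, ?_⟩
            rw [show z * t⁻¹ = z / t by ring, div_lt_one ht0]
            exact htz
          · rintro ⟨hu0, hu1⟩
            refine ⟨z / u, ?_, by field_simp⟩
            rw [lt_div_iff₀ hu0]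
            exact mul_lt_of_lt_one_right hz0 hu1
        have hder2 : ∀ t ∈ Ioi z,
            HasDerivWithinAt (fun t : ℝ => z * t⁻¹) (z * -(t^2)⁻¹) (Ioi z) t := fun t ht =>
          (HasDerivAt.const_mul z (hasDerivAt_inv (ne_of_gt (hz0.trans ht)))).hasDerivWithinAt
        have hinj2 : Set.InjOn (fun t : ℝ => z * t⁻¹) (Ioi z) := by
          intro t1 _ t2 _ h
          exact inv_injective (mul_left_cancel₀ hz0' h)
        conv_lhs => rw [← himg2]
        rw [cov1D measurableSet_Ioi hder2 hinj2]
        have hstep2 : ∀ t ∈ Ioi z,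
            ENNReal.ofReal |z * -(t^2)⁻¹| *
              (eβ (z * t⁻¹) * (ENNReal.ofReal (z * t⁻¹)⁻¹ * K ((z * t⁻¹)⁻¹ * z)))
            = ENNReal.ofReal (z^(p-1) * ((t-z)^(p-1) * Real.exp (-(t*δ)))) := by
          intro t ht
          rw [mem_Ioi] at ht
          have ht0 : 0 < t := hz0.trans ht
          have harg : (z * t⁻¹)⁻¹ * z = t := by field_simp
          have hb0 : 0 < z * t⁻¹ := by positivity
          have hb1 : z * t⁻¹ < 1 := by
            rw [show z * t⁻¹ = z / t by ring, div_lt_one ht0]; exact ht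
          rw [harg, hK, heβ]
          rw [← ENNReal.ofReal_mul (le_of_lt (inv_pos.2 hb0)),
            ← ENNReal.ofReal_mul (mul_nonneg (Real.rpow_nonneg hb0.le _)
              (Real.rpow_nonneg (by linarith) _)),
            ← ENNReal.ofReal_mul (abs_nonneg _)]
          congr 1
          have h1 : |z * -(t^2)⁻¹| = z * (t^2)⁻¹ := by
            rw [mul_neg, abs_neg, abs_of_pos (by positivity)]
          have h2 : (1 : ℝ) - z * t⁻¹ = (t - z) * t⁻¹ := by field_simp
          have h3 : (z * t⁻¹)^(p-1) = z^(p-1) * (t^(p-1))⁻¹ := by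
            rw [Real.mul_rpow hz0.le (inv_nonneg.2 ht0.le), Real.inv_rpow ht0.le]
          have h4 : ((t - z) * t⁻¹)^(p-1) = (t-z)^(p-1) * (t^(p-1))⁻¹ := by
            rw [Real.mul_rpow (by linarith) (inv_nonneg.2 ht0.le), Real.inv_rpow ht0.le]
          have h5 : t^(2*p-1) = t^(p-1) * (t^(p-1) * t) := by
            rw [show (2*p-1 : ℝ) = (p-1) + ((p-1)+1) by ring, Real.rpow_add ht0,
              Real.rpow_add ht0, Real.rpow_one]
          rw [h1, h2, h3, h4, h5]
          have hX : t^(p-1) ≠ 0 := (Real.rpow_pos_of_pos ht0 _).ne'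
          field_simp
        rw [setLIntegral_congr_fun measurableSet_Ioi (hstep2)]
        have himg3 : (fun r : ℝ => r + z) '' (Ioi 0) = Ioi z := by
          ext t
          simp only [mem_image, mem_Ioi]
          constructor
          · rintro ⟨r, hr, rfl⟩; linarith
          · intro ht; exact ⟨t - z, by linarith, by ring⟩
        conv_lhs => rw [← himg3]
        rw [cov1D measurableSet_Ioi
          (fun r _ => ((hasDerivAt_id' r).add_const z).hasDerivWithinAt)
          (fun a _ b _ h => by simpa using h)]
        have hstep3 : ∀ r ∈ Ioi (0:ℝ),
            ENNReal.ofReal |(1:ℝ)| *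
              ENNReal.ofReal (z^(p-1) * ((r + z - z)^(p-1) * Real.exp (-((r+z)*δ))))
            = ENNReal.ofReal (z^(p-1) * Real.exp (-(z*δ)))
                * ENNReal.ofReal (r^(p-1) * Real.exp (-(δ*r))) := by
          intro r _
          rw [abs_one, ENNReal.ofReal_one, one_mul, add_sub_cancel_right,
            ← ENNReal.ofReal_mul (by positivity)]
          congr 1
          rw [show -((r+z)*δ) = -(z*δ) + -(δ*r) by ring, Real.exp_add]
          ring
        rw [setLIntegral_congr_fun measurableSet_Ioi (hstep3),
          lintegral_const_mul' _ _ ENNReal.ofReal_ne_top, gamma_int hp hδ, mul_comm]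
    _ = ENNReal.ofReal (Real.Gamma p / δ^p)
          * ∫⁻ z in A, ENNReal.ofReal (z^(p-1) * Real.exp (-(z*δ))) := by
        rw [lintegral_const_mul' _ _ ENNReal.ofReal_ne_top]

theorem stepG (p θ θs : ℝ) (hθ : 0 < θ) (hθs : 0 < θs) (Γ : ℝ) (hΓ : 0 < Γ)
    (Z : ℝ → ℝ≥0∞) :
    ∫⁻ u in Ioo (0:ℝ) 1,
        ENNReal.ofReal (u^(p-1)*(1-u)^(p-1) * (((1-u)*θ+u*θs)^p * Γ)⁻¹) * Z (((1-u)*θ+u*θs)⁻¹)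
      = ENNReal.ofReal (((θ*θs)^p * Γ^2)⁻¹) *
          ∫⁻ w in Ioo (0:ℝ) 1,
            ENNReal.ofReal (w^(p-1)*(1-w)^(p-1) * (Γ / ((((1-w)*θ+w*θs)) / (θ*θs))^p))
              * Z ((((1-w)*θ+w*θs)) / (θ*θs)) := by
  have hD : ∀ w ∈ Ioo (0:ℝ) 1, 0 < (1-w)*θ + w*θs := fun w hw =>
    add_pos (mul_pos (by linarith [hw.2]) hθ) (mul_pos hw.1 hθs)
  have hmem : ∀ w ∈ Ioo (0:ℝ) 1, θ*(1-w)/((1-w)*θ+w*θs) ∈ Ioo (0:ℝ) 1 := by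
    intro w hw
    have hd := hD w hw
    constructor
    · exact div_pos (mul_pos hθ (by linarith [hw.2])) hd
    · rw [div_lt_one hd]
      nlinarith [mul_pos hw.1 hθs]
  have h1m : ∀ w ∈ Ioo (0:ℝ) 1,
      1 - θ*(1-w)/((1-w)*θ+w*θs) = θs*w/((1-w)*θ+w*θs) := by
    intro w hw
    have hd := (hD w hw).ne'
    rw [eq_div_iff hd, sub_mul, div_mul_cancel₀ _ hd]; ring
  have hDφ : ∀ w ∈ Ioo (0:ℝ) 1,
      (1 - θ*(1-w)/((1-w)*θ+w*θs))*θ + (θ*(1-w)/((1-w)*θ+w*θs))*θs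
        = θ*θs/((1-w)*θ+w*θs) := by
    intro w hw
    have hd := (hD w hw).ne'
    rw [eq_div_iff hd, add_mul, mul_right_comm, sub_mul, div_mul_cancel₀ _ hd, mul_right_comm (θ*(1-w)/_), div_mul_cancel₀ _ hd]; ring
  have hφφ : ∀ w ∈ Ioo (0:ℝ) 1,
      θ*(1 - θ*(1-w)/((1-w)*θ+w*θs)) /
        ((1 - θ*(1-w)/((1-w)*θ+w*θs))*θ + (θ*(1-w)/((1-w)*θ+w*θs))*θs) = w := by
    intro w hw
    rw [hDφ w hw, h1m w hw]
    have hd := (hD w hw).ne'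
    have hd2 : θ*(1-w)+θs*w ≠ 0 := by convert hd using 1; ring
    field_simp
  have himg : (fun w => θ*(1-w)/((1-w)*θ+w*θs)) '' Ioo (0:ℝ) 1 = Ioo (0:ℝ) 1 := by
    apply Subset.antisymm
    · rintro u ⟨w, hw, rfl⟩; exact hmem w hw
    · intro u hu
      exact ⟨θ*(1-u)/((1-u)*θ+u*θs), hmem u hu, hφφ u hu⟩
  have hinj : Set.InjOn (fun w => θ*(1-w)/((1-w)*θ+w*θs)) (Ioo (0:ℝ) 1) := by
    intro w1 h1 w2 h2 h
    have e1 := hφφ w1 h1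
    have e2 := hφφ w2 h2
    simp only at h
    rw [← e1, ← e2, h]
  have hder : ∀ w ∈ Ioo (0:ℝ) 1,
      HasDerivWithinAt (fun w => θ*(1-w)/((1-w)*θ+w*θs))
        (-(θ*θs) / ((1-w)*θ+w*θs)^2) (Ioo (0:ℝ) 1) w := by
    intro w hw
    have hd := hD w hw
    have hnum : HasDerivAt (fun w : ℝ => θ*(1-w)) (θ * (-1)) w :=
      HasDerivAt.const_mul θ ((hasDerivAt_id' w).const_sub 1)
    have hden : HasDerivAt (fun w : ℝ => (1-w)*θ + w*θs) ((-1)*θ + 1*θs) w :=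
      (((hasDerivAt_id' w).const_sub 1).mul_const θ).add ((hasDerivAt_id' w).mul_const θs)
    have := (hnum.fun_div hden hd.ne').hasDerivWithinAt (s := Ioo (0:ℝ) 1)
    exact this.congr_deriv (by ring)
  conv_lhs => rw [← himg]
  rw [cov1D measurableSet_Ioo hder hinj]
  rw [← lintegral_const_mul' _ _ ENNReal.ofReal_ne_top]
  refine setLIntegral_congr_fun measurableSet_Ioo (fun w hw => ?_)
  have hd := hD w hw
  rw [hDφ w hw, h1m w hw, inv_div]
  have habs : |(-(θ*θs) / ((1-w)*θ+w*θs)^2)| = (θ*θs) / ((1-w)*θ+w*θs)^2 := by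
    rw [show -(θ*θs) / ((1-w)*θ+w*θs)^2 = -((θ*θs) / ((1-w)*θ+w*θs)^2) by ring,
      abs_neg, abs_of_pos (by positivity)]
  rw [habs, ← mul_assoc, ← mul_assoc]
  congr 1
  have hw1' : (0:ℝ) < 1 - w := by linarith [hw.2]
  have nn1 : (0:ℝ) ≤ θ*θs / ((1-w)*θ+w*θs)^2 := div_nonneg (by positivity) (sq_nonneg _)
  have nn2 : (0:ℝ) ≤ ((θ*θs)^p * Γ^2)⁻¹ :=
    inv_nonneg.2 (mul_nonneg (Real.rpow_nonneg (by positivity) _) (sq_nonneg _))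
  rw [← ENNReal.ofReal_mul nn1, ← ENNReal.ofReal_mul nn2]
  congr 1
  have r1 : (θ*(1-w)/((1-w)*θ+w*θs))^(p-1)
      = θ^(p-1)*(1-w)^(p-1)/((1-w)*θ+w*θs)^(p-1) := by
    rw [Real.div_rpow (mul_nonneg hθ.le hw1'.le) hd.le, Real.mul_rpow hθ.le hw1'.le]
  have r2 : (θs*w/((1-w)*θ+w*θs))^(p-1)
      = θs^(p-1)*w^(p-1)/((1-w)*θ+w*θs)^(p-1) := by
    rw [Real.div_rpow (mul_nonneg hθs.le hw.1.le) hd.le, Real.mul_rpow hθs.le hw.1.le]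
  have r3 : (θ*θs/((1-w)*θ+w*θs))^p = θ^p*θs^p/((1-w)*θ+w*θs)^p := by
    rw [Real.div_rpow (by positivity) hd.le, Real.mul_rpow hθ.le hθs.le]
  have r4 : (((1-w)*θ+w*θs)/(θ*θs))^p = ((1-w)*θ+w*θs)^p/(θ^p*θs^p) := by
    rw [Real.div_rpow hd.le (by positivity), Real.mul_rpow hθ.le hθs.le]
  have r5 : (θ*θs)^p = θ^p*θs^p := Real.mul_rpow hθ.le hθs.le
  rw [r1, r2, r3, r4, r5, rpow_succ' hθ.ne' p, rpow_succ' hθs.ne' p,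
    rpow_succ' hd.ne' p]
  have n1 : θ^(p-1) ≠ 0 := (Real.rpow_pos_of_pos hθ _).ne'
  have n2 : θs^(p-1) ≠ 0 := (Real.rpow_pos_of_pos hθs _).ne'
  have n3 : ((1-w)*θ+w*θs)^(p-1) ≠ 0 := (Real.rpow_pos_of_pos hd _).ne'
  field_simp

theorem middle (p θ θs : ℝ) (hp : 0 < p) (hθ : 0 < θ) (hθs : 0 < θs)
    (A : Set ℝ) (hA : MeasurableSet A) (hA' : A ⊆ Ici 0) :
    (∫⁻ x in Ioi (0:ℝ), ENNReal.ofReal (x^(p-1) * Real.exp (-x/θ)) *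
       ∫⁻ y in Ioi (0:ℝ), ENNReal.ofReal (y^(p-1) * Real.exp (-y/θs)) *
         ∫⁻ b in Ioo (0:ℝ) 1, ENNReal.ofReal (b^(p-1)*(1-b)^(p-1)) * A.indicator 1 (b*(x+y)))
    = ∫⁻ w in Ioo (0:ℝ) 1,
        ENNReal.ofReal (w^(p-1)*(1-w)^(p-1) * (Real.Gamma p / (((1-w)*θ+w*θs)/(θ*θs))^p))
          * ∫⁻ z in A, ENNReal.ofReal (z^(p-1) *
              Real.exp (-(z * (((1-w)*θ+w*θs)/(θ*θs))))) := by
  have hβm : Measurable fun b : ℝ => ENNReal.ofReal (b^(p-1) * (1-b)^(p-1)) := by fun_prop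
  have hIm : Measurable (fun c : ℝ => A.indicator (1 : ℝ → ℝ≥0∞) c) :=
    (measurable_one : Measurable (1 : ℝ → ℝ≥0∞)).indicator hA
  have hJm : Measurable fun t : ℝ => ∫⁻ b in Ioo (0:ℝ) 1,
      ENNReal.ofReal (b^(p-1)*(1-b)^(p-1)) * A.indicator 1 (b*t) := by
    apply Measurable.lintegral_prod_right'
      (f := fun q : ℝ × ℝ => ENNReal.ofReal (q.2^(p-1)*(1-q.2)^(p-1)) * A.indicator 1 (q.2*q.1))
    exact ((hβm.comp measurable_snd)).mul (hIm.comp' (measurable_snd.mul measurable_fst))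
  have hF1 : Measurable fun x : ℝ => ENNReal.ofReal (x^(p-1) * Real.exp (-x/θ)) := by fun_prop
  have hF2 : Measurable fun y : ℝ => ENNReal.ofReal (y^(p-1) * Real.exp (-y/θs)) := by fun_prop
  calc (∫⁻ x in Ioi (0:ℝ), ENNReal.ofReal (x^(p-1) * Real.exp (-x/θ)) *
       ∫⁻ y in Ioi (0:ℝ), ENNReal.ofReal (y^(p-1) * Real.exp (-y/θs)) *
         ∫⁻ b in Ioo (0:ℝ) 1, ENNReal.ofReal (b^(p-1)*(1-b)^(p-1)) * A.indicator 1 (b*(x+y)))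
      = ∫⁻ x in Ioi (0:ℝ), ∫⁻ t in Ioi (0:ℝ), (Ioi x).indicator 1 t *
          (ENNReal.ofReal (x^(p-1) * Real.exp (-x/θ)) *
            (ENNReal.ofReal ((t-x)^(p-1) * Real.exp (-(t-x)/θs)) *
              ∫⁻ b in Ioo (0:ℝ) 1, ENNReal.ofReal (b^(p-1)*(1-b)^(p-1)) * A.indicator 1 (b*t))) := by
        refine setLIntegral_congr_fun measurableSet_Ioi (fun x hx => ?_)
        rw [mem_Ioi] at hx
        have himgA : (fun t : ℝ => t - x) '' (Ioi x) = Ioi 0 := by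
          rw [image_sub_const_Ioi, sub_self]
        conv_lhs => rw [← himgA, cov1D measurableSet_Ioi
          (fun t _ => ((hasDerivAt_id' t).sub_const x).hasDerivWithinAt)
          (fun a _ b _ h => by simpa using h)]
        rw [← lintegral_const_mul' _ _ ENNReal.ofReal_ne_top]
        have hstep : ∀ t ∈ Ioi x,
            ENNReal.ofReal (x^(p-1) * Real.exp (-x/θ)) * (ENNReal.ofReal |(1:ℝ)| *
              (ENNReal.ofReal ((t-x)^(p-1) * Real.exp (-(t-x)/θs)) *
                ∫⁻ b in Ioo (0:ℝ) 1, ENNReal.ofReal (b^(p-1)*(1-b)^(p-1))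
                  * A.indicator 1 (b*(x+(t-x)))))
            = ENNReal.ofReal (x^(p-1) * Real.exp (-x/θ)) *
                (ENNReal.ofReal ((t-x)^(p-1) * Real.exp (-(t-x)/θs)) *
                  ∫⁻ b in Ioo (0:ℝ) 1, ENNReal.ofReal (b^(p-1)*(1-b)^(p-1))
                    * A.indicator 1 (b*t)) := by
          intro t _
          rw [abs_one, ENNReal.ofReal_one, one_mul, show x + (t-x) = t from by ring]
        rw [setLIntegral_congr_fun measurableSet_Ioi (hstep)]
        symm
        rw [setLIntegral_congr_fun measurableSet_Ioi (fun t (_ : t ∈ Ioi (0:ℝ)) =>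
          (by by_cases hxt : x < t <;> simp [Set.indicator_apply, hxt] :
            (Ioi x).indicator (1 : ℝ → ℝ≥0∞) t *
              (ENNReal.ofReal (x^(p-1) * Real.exp (-x/θ)) *
                (ENNReal.ofReal ((t-x)^(p-1) * Real.exp (-(t-x)/θs)) *
                  ∫⁻ b in Ioo (0:ℝ) 1, ENNReal.ofReal (b^(p-1)*(1-b)^(p-1))
                    * A.indicator 1 (b*t)))
            = (Ioi x).indicator (fun t => ENNReal.ofReal (x^(p-1) * Real.exp (-x/θ)) *
                (ENNReal.ofReal ((t-x)^(p-1) * Real.exp (-(t-x)/θs)) *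
                  ∫⁻ b in Ioo (0:ℝ) 1, ENNReal.ofReal (b^(p-1)*(1-b)^(p-1))
                    * A.indicator 1 (b*t))) t))]
        rw [lintegral_indicator measurableSet_Ioi,
          Measure.restrict_restrict measurableSet_Ioi, Set.Ioi_inter_Ioi,
          max_eq_left hx.le]
    _ = ∫⁻ t in Ioi (0:ℝ), ∫⁻ x in Ioi (0:ℝ), (Ioi x).indicator 1 t *
          (ENNReal.ofReal (x^(p-1) * Real.exp (-x/θ)) *
            (ENNReal.ofReal ((t-x)^(p-1) * Real.exp (-(t-x)/θs)) *
              ∫⁻ b in Ioo (0:ℝ) 1, ENNReal.ofReal (b^(p-1)*(1-b)^(p-1)) * A.indicator 1 (b*t))) := by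
        refine lintegral_lintegral_swap ?_
        apply Measurable.aemeasurable
        refine Measurable.mul ?_ ?_
        · exact (measurable_one : Measurable (1 : ℝ × ℝ → ℝ≥0∞)).indicator
            (measurableSet_lt measurable_fst measurable_snd)
        · exact (hF1.comp measurable_fst).mul
            ((hF2.comp' (measurable_snd.sub measurable_fst)).mul (hJm.comp measurable_snd))
    _ = ∫⁻ t in Ioi (0:ℝ), (∫⁻ x in Ioo (0:ℝ) t,
          ENNReal.ofReal (x^(p-1) * Real.exp (-x/θ)) *
            ENNReal.ofReal ((t-x)^(p-1) * Real.exp (-(t-x)/θs))) *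
          ∫⁻ b in Ioo (0:ℝ) 1, ENNReal.ofReal (b^(p-1)*(1-b)^(p-1)) * A.indicator 1 (b*t) := by
        refine setLIntegral_congr_fun measurableSet_Ioi (fun t _ => ?_)
        rw [setLIntegral_congr_fun measurableSet_Ioi (fun x (_ : x ∈ Ioi (0:ℝ)) =>
          (by by_cases hxt : x < t <;>
              simp [Set.indicator_apply, hxt, mul_assoc] :
            (Ioi x).indicator (1 : ℝ → ℝ≥0∞) t *
              (ENNReal.ofReal (x^(p-1) * Real.exp (-x/θ)) *
                (ENNReal.ofReal ((t-x)^(p-1) * Real.exp (-(t-x)/θs)) *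
                  ∫⁻ b in Ioo (0:ℝ) 1, ENNReal.ofReal (b^(p-1)*(1-b)^(p-1)) * A.indicator 1 (b*t)))
            = (Iio t).indicator (fun x => ENNReal.ofReal (x^(p-1) * Real.exp (-x/θ)) *
                ENNReal.ofReal ((t-x)^(p-1) * Real.exp (-(t-x)/θs))) x *
                ∫⁻ b in Ioo (0:ℝ) 1, ENNReal.ofReal (b^(p-1)*(1-b)^(p-1)) * A.indicator 1 (b*t)))]
        rw [lintegral_mul_const _ (Measurable.indicator
          (by fun_prop : Measurable fun x : ℝ =>
            ENNReal.ofReal (x^(p-1) * Real.exp (-x/θ)) *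
              ENNReal.ofReal ((t-x)^(p-1) * Real.exp (-(t-x)/θs))) measurableSet_Iio)]
        congr 1
        rw [lintegral_indicator measurableSet_Iio,
          Measure.restrict_restrict measurableSet_Iio, Set.Iio_inter_Ioi]
    _ = ∫⁻ t in Ioi (0:ℝ), (∫⁻ w in Ioo (0:ℝ) 1,
          ENNReal.ofReal (t^(2*p-1) * (w^(p-1)*(1-w)^(p-1)) *
            Real.exp (-(t * (((1-w)*θ+w*θs)/(θ*θs)))))) *
          ∫⁻ b in Ioo (0:ℝ) 1, ENNReal.ofReal (b^(p-1)*(1-b)^(p-1)) * A.indicator 1 (b*t) := by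
        refine setLIntegral_congr_fun measurableSet_Ioi (fun t ht => ?_)
        rw [mem_Ioi] at ht
        congr 1
        have himgB : (fun w : ℝ => t*w) '' Ioo (0:ℝ) 1 = Ioo (0:ℝ) t := by
          rw [image_mul_left_Ioo ht, mul_zero, mul_one]
        conv_lhs => rw [← himgB, cov1D measurableSet_Ioo
          (fun w _ => by simpa using
            (HasDerivAt.const_mul t (hasDerivAt_id' w)).hasDerivWithinAt (s := Ioo (0:ℝ) 1))
          (fun a _ b _ h => mul_left_cancel₀ ht.ne' h)]
        refine setLIntegral_congr_fun measurableSet_Ioo (fun w hw => ?_)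
        have hw1 : (0:ℝ) < 1 - w := by linarith [hw.2]
        rw [abs_of_pos ht,
          ← ENNReal.ofReal_mul (mul_nonneg
            (Real.rpow_nonneg (mul_nonneg ht.le hw.1.le) _) (Real.exp_pos _).le),
          ← ENNReal.ofReal_mul ht.le]
        congr 1
        have e0 : t - t*w = t*(1-w) := by ring
        have h5 : t^(2*p-1) = t^(p-1) * (t^(p-1) * t) := by
          rw [show (2*p-1 : ℝ) = (p-1) + ((p-1)+1) by ring, Real.rpow_add ht,
            Real.rpow_add ht, Real.rpow_one]
        have hE : Real.exp (-(t*w)/θ) * Real.exp (-(t*(1-w))/θs)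
            = Real.exp (-(t * (((1-w)*θ+w*θs)/(θ*θs)))) := by
          rw [← Real.exp_add]
          congr 1
          field_simp
          ring
        rw [e0, Real.mul_rpow ht.le hw.1.le, Real.mul_rpow ht.le hw1.le, h5]
        linear_combination (t * (t^(p-1) * w^(p-1)) * (t^(p-1) * (1-w)^(p-1))) * hE
    _ = ∫⁻ w in Ioo (0:ℝ) 1, ∫⁻ t in Ioi (0:ℝ),
          ENNReal.ofReal (t^(2*p-1) * (w^(p-1)*(1-w)^(p-1)) *
            Real.exp (-(t * (((1-w)*θ+w*θs)/(θ*θs))))) *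
          ∫⁻ b in Ioo (0:ℝ) 1, ENNReal.ofReal (b^(p-1)*(1-b)^(p-1)) * A.indicator 1 (b*t) := by
        rw [lintegral_congr (fun t => (lintegral_mul_const _
          (by fun_prop : Measurable fun w : ℝ =>
            ENNReal.ofReal (t^(2*p-1) * (w^(p-1)*(1-w)^(p-1)) *
              Real.exp (-(t * (((1-w)*θ+w*θs)/(θ*θs))))))).symm)]
        refine lintegral_lintegral_swap ?_
        apply Measurable.aemeasurable
        refine Measurable.mul ?_ (hJm.comp measurable_fst)
        fun_prop
    _ = ∫⁻ w in Ioo (0:ℝ) 1,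
        ENNReal.ofReal (w^(p-1)*(1-w)^(p-1) * (Real.Gamma p / (((1-w)*θ+w*θs)/(θ*θs))^p))
          * ∫⁻ z in A, ENNReal.ofReal (z^(p-1) *
              Real.exp (-(z * (((1-w)*θ+w*θs)/(θ*θs))))) := by
        refine setLIntegral_congr_fun measurableSet_Ioo (fun w hw => ?_)
        have hw1 : (0:ℝ) < 1 - w := by linarith [hw.2]
        have hδw : 0 < ((1-w)*θ+w*θs)/(θ*θs) :=
          div_pos (add_pos (mul_pos hw1 hθ) (mul_pos hw.1 hθs)) (mul_pos hθ hθs)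
        have hbn : (0:ℝ) ≤ w^(p-1)*(1-w)^(p-1) :=
          mul_nonneg (Real.rpow_nonneg hw.1.le _) (Real.rpow_nonneg hw1.le _)
        calc ∫⁻ t in Ioi (0:ℝ),
              ENNReal.ofReal (t^(2*p-1) * (w^(p-1)*(1-w)^(p-1)) *
                Real.exp (-(t * (((1-w)*θ+w*θs)/(θ*θs))))) *
              ∫⁻ b in Ioo (0:ℝ) 1, ENNReal.ofReal (b^(p-1)*(1-b)^(p-1)) * A.indicator 1 (b*t)
            = ∫⁻ t in Ioi (0:ℝ), ENNReal.ofReal (w^(p-1)*(1-w)^(p-1)) *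
                (ENNReal.ofReal (t^(2*p-1) * Real.exp (-(t * (((1-w)*θ+w*θs)/(θ*θs))))) *
                  ∫⁻ b in Ioo (0:ℝ) 1,
                    ENNReal.ofReal (b^(p-1)*(1-b)^(p-1)) * A.indicator 1 (b*t)) := by
              refine lintegral_congr fun t => ?_
              rw [show t^(2*p-1) * (w^(p-1)*(1-w)^(p-1)) *
                    Real.exp (-(t * (((1-w)*θ+w*θs)/(θ*θs))))
                  = (w^(p-1)*(1-w)^(p-1)) *
                    (t^(2*p-1) * Real.exp (-(t * (((1-w)*θ+w*θs)/(θ*θs))))) from by ring,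
                ENNReal.ofReal_mul hbn, mul_assoc]
          _ = ENNReal.ofReal (w^(p-1)*(1-w)^(p-1)) *
              (ENNReal.ofReal (Real.Gamma p / (((1-w)*θ+w*θs)/(θ*θs))^p) *
                ∫⁻ z in A, ENNReal.ofReal (z^(p-1) *
                  Real.exp (-(z * (((1-w)*θ+w*θs)/(θ*θs)))))) := by
              rw [lintegral_const_mul' _ _ ENNReal.ofReal_ne_top,
                inner_bt p hp _ hδw A hA hA']
          _ = ENNReal.ofReal (w^(p-1)*(1-w)^(p-1) *
                (Real.Gamma p / (((1-w)*θ+w*θs)/(θ*θs))^p))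
              * ∫⁻ z in A, ENNReal.ofReal (z^(p-1) *
                  Real.exp (-(z * (((1-w)*θ+w*θs)/(θ*θs))))) := by
              rw [ENNReal.ofReal_mul hbn, mul_assoc]

theorem pull2 {S : Set ℝ} (c d : ℝ≥0∞) (hc : c ≠ ⊤) (hd : d ≠ ⊤) (f g : ℝ → ℝ≥0∞) :
    ∫⁻ a in S, (c * f a) * (d * g a) = (c * d) * ∫⁻ a in S, f a * g a := by
  rw [← lintegral_const_mul' (c*d) _ (ENNReal.mul_ne_top hc hd)]
  exact lintegral_congr fun a => by ring

theorem pull1 {S : Set ℝ} (c : ℝ≥0∞) (hc : c ≠ ⊤) (f g : ℝ → ℝ≥0∞) :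
    ∫⁻ a in S, (c * f a) * g a = c * ∫⁻ a in S, f a * g a := by
  rw [← lintegral_const_mul' c _ hc]
  exact lintegral_congr fun a => by ring

/-- Intertwining of the continuous generalized KMP reservoir with the hidden-parameter
reservoir via the Gamma kernel: if `X ~ Gamma(2s, θ)`, `Y ~ Gamma(2s, θ*)` and
`B ~ Beta(2s,2s)` are independent, then the law of `B·(X+Y)` is the Beta(2s,2s)-mixture of
the Gamma laws `Gamma(2s, (1−u)θ + uθ*)`. -/
theorem kmp_reservoir_intertwining (s θ θs : ℝ) (hs : 0 < s) (hθ : 0 < θ) (hθs : 0 < θs)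
    (A : Set ℝ) (hA : MeasurableSet A) (hA' : A ⊆ Set.Ici 0) :
    Measure.map (fun q : ℝ × ℝ × ℝ => q.2.2 * (q.1 + q.2.1))
        ((gammaMeas s θ).prod ((gammaMeas s θs).prod (betaMeas s))) A
      = ENNReal.ofReal
          (∫ u in Set.Ioo (0 : ℝ) 1,
            (∫ x in A, gammaDens s ((1 - u) * θ + u * θs) x) * betaDens s u) := by
  have hp : (0:ℝ) < 2*s := by linarith
  have hΓ : 0 < Real.Gamma (2*s) := Real.Gamma_pos_of_pos hp
  by_cases hInt : IntegrableOn (fun v : ℝ => v ^ (2*s-1) * (1-v) ^ (2*s-1))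
      (Ioo (0:ℝ) 1) volume
  swap
  · -- beta normalization not integrable: both sides are zero
    have hB : (∫ v in Ioo (0:ℝ) 1, v ^ (2*s-1) * (1-v) ^ (2*s-1)) = 0 := integral_undef hInt
    have hbd : ∀ u : ℝ, betaDens s u = 0 := fun u => by
      unfold betaDens
      rw [show (∫ v in Set.Ioo (0:ℝ) 1, v ^ (2 * s - 1) * (1 - v) ^ (2 * s - 1)) = 0 from hB,
        div_zero]
    have hbm : betaMeas s = 0 := by
      unfold betaMeas
      simp [hbd]
    rw [hbm, Measure.prod_zero, Measure.prod_zero, Measure.map_zero]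
    simp [hbd]
  -- main case
  have hB0 : (0:ℝ) ≤ ∫ v in Ioo (0:ℝ) 1, v ^ (2*s-1) * (1-v) ^ (2*s-1) :=
    setIntegral_nonneg measurableSet_Ioo fun v hv =>
      mul_nonneg (Real.rpow_nonneg hv.1.le _) (Real.rpow_nonneg (by linarith [hv.2]) _)
  set B := ∫ v in Ioo (0:ℝ) 1, v ^ (2*s-1) * (1-v) ^ (2*s-1) with hBdef
  have hsplit1 : ∀ x:ℝ, ENNReal.ofReal (gammaDens s θ x)
      = ENNReal.ofReal ((θ^(2*s)*Real.Gamma (2*s))⁻¹)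
        * ENNReal.ofReal (x^(2*s-1) * Real.exp (-x/θ)) := fun x => by
    rw [show gammaDens s θ x = (θ^(2*s)*Real.Gamma (2*s))⁻¹ * (x^(2*s-1) * Real.exp (-x/θ))
        from by unfold gammaDens; ring,
      ENNReal.ofReal_mul (inv_nonneg.2 (mul_nonneg (Real.rpow_nonneg hθ.le _) hΓ.le))]
  have hsplit2 : ∀ y:ℝ, ENNReal.ofReal (gammaDens s θs y)
      = ENNReal.ofReal ((θs^(2*s)*Real.Gamma (2*s))⁻¹)
        * ENNReal.ofReal (y^(2*s-1) * Real.exp (-y/θs)) := fun y => by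
    rw [show gammaDens s θs y = (θs^(2*s)*Real.Gamma (2*s))⁻¹ * (y^(2*s-1) * Real.exp (-y/θs))
        from by unfold gammaDens; ring,
      ENNReal.ofReal_mul (inv_nonneg.2 (mul_nonneg (Real.rpow_nonneg hθs.le _) hΓ.le))]
  have hsplit3 : ∀ b:ℝ, ENNReal.ofReal (betaDens s b)
      = ENNReal.ofReal (B⁻¹) * ENNReal.ofReal (b^(2*s-1)*(1-b)^(2*s-1)) := fun b => by
    rw [show betaDens s b = B⁻¹ * (b^(2*s-1)*(1-b)^(2*s-1))
        from by unfold betaDens; rw [← hBdef]; ring,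
      ENNReal.ofReal_mul (inv_nonneg.2 hB0)]
  -- step 1 : unfold the pushforward into a triple integral
  haveI i1 : SigmaFinite (gammaMeas s θ) := by unfold gammaMeas; infer_instance
  haveI i2 : SigmaFinite (gammaMeas s θs) := by unfold gammaMeas; infer_instance
  haveI i3 : SigmaFinite (betaMeas s) := by unfold betaMeas; infer_instance
  have hmap : Measurable fun q : ℝ × ℝ × ℝ => q.2.2 * (q.1 + q.2.1) := by fun_prop
  have hd1 : Measurable fun x : ℝ => ENNReal.ofReal (gammaDens s θ x) := by
    unfold gammaDens; fun_prop
  have hd2 : Measurable fun y : ℝ => ENNReal.ofReal (gammaDens s θs y) := by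
    unfold gammaDens; fun_prop
  have hd3 : Measurable fun b : ℝ => ENNReal.ofReal (betaDens s b) := by
    unfold betaDens; fun_prop
  have hstep1 : Measure.map (fun q : ℝ × ℝ × ℝ => q.2.2 * (q.1 + q.2.1))
        ((gammaMeas s θ).prod ((gammaMeas s θs).prod (betaMeas s))) A
      = ∫⁻ x in Ioi (0:ℝ), ENNReal.ofReal (gammaDens s θ x) *
          ∫⁻ y in Ioi (0:ℝ), ENNReal.ofReal (gammaDens s θs y) *
            ∫⁻ b in Ioo (0:ℝ) 1, ENNReal.ofReal (betaDens s b) *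
              A.indicator 1 (b * (x + y)) := by
    have hind : Measurable fun q : ℝ × ℝ × ℝ =>
        A.indicator (1 : ℝ → ℝ≥0∞) (q.2.2 * (q.1 + q.2.1)) := by
      exact ((measurable_one : Measurable (1 : ℝ → ℝ≥0∞))).indicator hA |>.comp' hmap
    rw [Measure.map_apply hmap hA]
    rw [← lintegral_indicator_one (hmap hA)]
    have hptw : ∀ q : ℝ × ℝ × ℝ,
        ((fun q : ℝ × ℝ × ℝ => q.2.2 * (q.1 + q.2.1)) ⁻¹' A).indicator 1 q
        = A.indicator (1 : ℝ → ℝ≥0∞) (q.2.2 * (q.1 + q.2.1)) := by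
      intro q; rfl
    rw [lintegral_congr hptw]
    rw [lintegral_prod _ hind.aemeasurable]
    rw [gammaMeas, lintegral_withDensity_eq_lintegral_mul_non_measurable _ hd1
      (ae_of_all _ fun x => ENNReal.ofReal_lt_top)]
    simp only [Pi.mul_apply]
    refine setLIntegral_congr_fun measurableSet_Ioi (fun x _ => ?_)
    congr 1
    have hind2 : Measurable fun yz : ℝ × ℝ =>
        A.indicator (1 : ℝ → ℝ≥0∞) (yz.2 * (x + yz.1)) := by
      exact ((measurable_one : Measurable (1 : ℝ → ℝ≥0∞))).indicator hA |>.comp'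
        (by fun_prop : Measurable fun yz : ℝ × ℝ => yz.2 * (x + yz.1))
    rw [lintegral_prod _ hind2.aemeasurable]
    rw [gammaMeas, lintegral_withDensity_eq_lintegral_mul_non_measurable _ hd2
      (ae_of_all _ fun y => ENNReal.ofReal_lt_top)]
    simp only [Pi.mul_apply]
    refine setLIntegral_congr_fun measurableSet_Ioi (fun y _ => ?_)
    congr 1
    rw [betaMeas, lintegral_withDensity_eq_lintegral_mul_non_measurable _ hd3
      (ae_of_all _ fun b => ENNReal.ofReal_lt_top)]
    simp only [Pi.mul_apply]
  -- gamma mass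
  have gmass : ∀ c : ℝ, 0 < c →
      (∫⁻ z in Ioi (0:ℝ), ENNReal.ofReal (gammaDens s c z)) = 1 := by
    intro c hc
    have hsp : ∀ z:ℝ, ENNReal.ofReal (gammaDens s c z)
        = ENNReal.ofReal ((c^(2*s)*Real.Gamma (2*s))⁻¹)
          * ENNReal.ofReal (z^(2*s-1) * Real.exp (-(c⁻¹*z))) := fun z => by
      rw [show gammaDens s c z
          = (c^(2*s)*Real.Gamma (2*s))⁻¹ * (z^(2*s-1) * Real.exp (-(c⁻¹*z))) from by
          unfold gammaDens; rw [show -z/c = -(c⁻¹*z) from by ring]; ring,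
        ENNReal.ofReal_mul (inv_nonneg.2 (mul_nonneg (Real.rpow_nonneg hc.le _) hΓ.le))]
    simp only [hsp]
    rw [lintegral_const_mul' _ _ ENNReal.ofReal_ne_top, gamma_int hp (inv_pos.2 hc),
      ← ENNReal.ofReal_mul (inv_nonneg.2 (mul_nonneg (Real.rpow_nonneg hc.le _) hΓ.le)),
      Real.inv_rpow hc.le]
    rw [show (c^(2*s)*Real.Gamma (2*s))⁻¹ * (Real.Gamma (2*s) / (c^(2*s))⁻¹) = 1 from by
      have h1 : c^(2*s) ≠ 0 := (Real.rpow_pos_of_pos hc _).ne'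
      field_simp]
    exact ENNReal.ofReal_one
  have hGle : ∀ c:ℝ, 0 < c → (∫⁻ z in A, ENNReal.ofReal (gammaDens s c z)) ≤ 1 := by
    intro c hc
    calc ∫⁻ z in A, ENNReal.ofReal (gammaDens s c z)
        ≤ ∫⁻ z in Ici (0:ℝ), ENNReal.ofReal (gammaDens s c z) :=
          lintegral_mono' (Measure.restrict_mono hA' le_rfl) le_rfl
      _ = ∫⁻ z in Ioi (0:ℝ), ENNReal.ofReal (gammaDens s c z) := by
          rw [restrict_Ioi_eq_restrict_Ici]
      _ = 1 := gmass c hc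
  have hθu : ∀ u ∈ Ioo (0:ℝ) 1, 0 < (1-u)*θ+u*θs := fun u hu =>
    add_pos (mul_pos (by linarith [hu.2]) hθ) (mul_pos hu.1 hθs)
  have hgm : Measurable fun u : ℝ =>
      ∫⁻ x in A, ENNReal.ofReal (gammaDens s ((1-u)*θ+u*θs) x) := by
    apply Measurable.lintegral_prod_right'
      (f := fun q : ℝ×ℝ => ENNReal.ofReal (gammaDens s ((1-q.1)*θ+q.1*θs) q.2))
    unfold gammaDens
    fun_prop
  have hbdm : Measurable fun u : ℝ => betaDens s u := by
    unfold betaDens; fun_prop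
  have hIn : ∀ u ∈ Ioo (0:ℝ) 1, (∫ x in A, gammaDens s ((1-u)*θ+u*θs) x)
      = (∫⁻ x in A, ENNReal.ofReal (gammaDens s ((1-u)*θ+u*θs) x)).toReal := by
    intro u hu
    have hc := hθu u hu
    refine integral_eq_lintegral_of_nonneg_ae ?_ ?_
    · refine (ae_restrict_iff' hA).2 (ae_of_all _ fun x hx => ?_)
      have hx0 : (0:ℝ) ≤ x := hA' hx
      unfold gammaDens
      exact div_nonneg (mul_nonneg (Real.rpow_nonneg hx0 _) (Real.exp_pos _).le)
        (mul_nonneg (Real.rpow_nonneg hc.le _) hΓ.le)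
    · exact (by unfold gammaDens; fun_prop :
        Measurable fun x => gammaDens s ((1-u)*θ+u*θs) x).aestronglyMeasurable
  have hβlint : ∫⁻ u in Ioo (0:ℝ) 1, ENNReal.ofReal (u^(2*s-1)*(1-u)^(2*s-1))
      = ENNReal.ofReal B := by
    rw [hBdef]
    exact (ofReal_integral_eq_lintegral_ofReal hInt
      ((ae_restrict_iff' measurableSet_Ioo).2 (ae_of_all _ fun v hv =>
        mul_nonneg (Real.rpow_nonneg hv.1.le _)
          (Real.rpow_nonneg (by linarith [hv.2]) _)))).symm
  have hfin : (∫⁻ u in Ioo (0:ℝ) 1,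
      (∫⁻ x in A, ENNReal.ofReal (gammaDens s ((1-u)*θ+u*θs) x))
        * ENNReal.ofReal (betaDens s u)) ≠ ⊤ := by
    have hle : (∫⁻ u in Ioo (0:ℝ) 1,
        (∫⁻ x in A, ENNReal.ofReal (gammaDens s ((1-u)*θ+u*θs) x))
          * ENNReal.ofReal (betaDens s u))
        ≤ ∫⁻ u in Ioo (0:ℝ) 1, 1 * ENNReal.ofReal (betaDens s u) := by
      refine lintegral_mono_ae ?_
      refine (ae_restrict_iff' measurableSet_Ioo).2 (ae_of_all _ fun u hu => ?_)
      exact mul_le_mul' (hGle _ (hθu u hu)) le_rfl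
    refine ne_of_lt (lt_of_le_of_lt hle ?_)
    simp only [one_mul, hsplit3]
    rw [lintegral_const_mul' _ _ ENNReal.ofReal_ne_top, hβlint]
    exact ENNReal.mul_lt_top ENNReal.ofReal_lt_top ENNReal.ofReal_lt_top
  -- RHS conversion to a lintegral
  have hRHSofReal : ENNReal.ofReal
        (∫ u in Ioo (0:ℝ) 1, (∫ x in A, gammaDens s ((1-u)*θ+u*θs) x) * betaDens s u)
      = ∫⁻ u in Ioo (0:ℝ) 1,
          (∫⁻ x in A, ENNReal.ofReal (gammaDens s ((1-u)*θ+u*θs) x))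
            * ENNReal.ofReal (betaDens s u) := by
    rw [setIntegral_congr_fun measurableSet_Ioo (fun u hu => by
      dsimp only; rw [hIn u hu] :
      EqOn (fun u => (∫ x in A, gammaDens s ((1-u)*θ+u*θs) x) * betaDens s u)
        (fun u => (∫⁻ x in A,
          ENNReal.ofReal (gammaDens s ((1-u)*θ+u*θs) x)).toReal * betaDens s u)
        (Ioo (0:ℝ) 1))]
    rw [integral_eq_lintegral_of_nonneg_ae ?_ ?_]
    · rw [setLIntegral_congr_fun measurableSet_Ioo (fun u hu => ?_),
        ENNReal.ofReal_toReal hfin]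
      rw [ENNReal.ofReal_mul ENNReal.toReal_nonneg,
        ENNReal.ofReal_toReal (ne_of_lt (lt_of_le_of_lt (hGle _ (hθu u hu))
          ENNReal.one_lt_top))]
    · refine (ae_restrict_iff' measurableSet_Ioo).2 (ae_of_all _ fun u hu => ?_)
      refine mul_nonneg ENNReal.toReal_nonneg ?_
      unfold betaDens
      rw [← hBdef]
      exact div_nonneg (mul_nonneg (Real.rpow_nonneg hu.1.le _)
        (Real.rpow_nonneg (by linarith [hu.2]) _)) hB0
    · exact ((hgm.ennreal_toReal).mul hbdm).aestronglyMeasurable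
  -- identify the lintegral with c3 * U
  have hUg : ∀ u ∈ Ioo (0:ℝ) 1,
      (∫⁻ x in A, ENNReal.ofReal (gammaDens s ((1-u)*θ+u*θs) x))
      = ENNReal.ofReal ((((1-u)*θ+u*θs)^(2*s)*Real.Gamma (2*s))⁻¹)
        * ∫⁻ z in A, ENNReal.ofReal (z^(2*s-1)
            * Real.exp (-(z * ((1-u)*θ+u*θs)⁻¹))) := by
    intro u hu
    have hc := hθu u hu
    have hsp : ∀ z:ℝ, ENNReal.ofReal (gammaDens s ((1-u)*θ+u*θs) z)
        = ENNReal.ofReal ((((1-u)*θ+u*θs)^(2*s)*Real.Gamma (2*s))⁻¹)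
          * ENNReal.ofReal (z^(2*s-1) * Real.exp (-(z * ((1-u)*θ+u*θs)⁻¹))) := fun z => by
      rw [show gammaDens s ((1-u)*θ+u*θs) z
          = (((1-u)*θ+u*θs)^(2*s)*Real.Gamma (2*s))⁻¹
            * (z^(2*s-1) * Real.exp (-(z * ((1-u)*θ+u*θs)⁻¹))) from by
          unfold gammaDens
          rw [show -z/((1-u)*θ+u*θs) = -(z*((1-u)*θ+u*θs)⁻¹) from by ring]
          ring,
        ENNReal.ofReal_mul (inv_nonneg.2 (mul_nonneg (Real.rpow_nonneg hc.le _) hΓ.le))]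
    simp only [hsp]
    rw [lintegral_const_mul' _ _ ENNReal.ofReal_ne_top]
  have hRHSlint : (∫⁻ u in Ioo (0:ℝ) 1,
        (∫⁻ x in A, ENNReal.ofReal (gammaDens s ((1-u)*θ+u*θs) x))
          * ENNReal.ofReal (betaDens s u))
      = ENNReal.ofReal B⁻¹ *
          ∫⁻ u in Ioo (0:ℝ) 1,
            ENNReal.ofReal (u^(2*s-1)*(1-u)^(2*s-1)
                * (((1-u)*θ+u*θs)^(2*s) * Real.Gamma (2*s))⁻¹)
              * ∫⁻ z in A, ENNReal.ofReal (z^(2*s-1)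
                  * Real.exp (-(z * ((1-u)*θ+u*θs)⁻¹))) := by
    rw [← lintegral_const_mul' _ _ ENNReal.ofReal_ne_top]
    refine setLIntegral_congr_fun measurableSet_Ioo (fun u hu => ?_)
    have hc := hθu u hu
    have hbnu : (0:ℝ) ≤ u^(2*s-1)*(1-u)^(2*s-1) :=
      mul_nonneg (Real.rpow_nonneg hu.1.le _) (Real.rpow_nonneg (by linarith [hu.2]) _)
    rw [hUg u hu, hsplit3 u, ENNReal.ofReal_mul hbnu]
    ring
  -- put everything together
  have hc12 : ENNReal.ofReal ((θ^(2*s)*Real.Gamma (2*s))⁻¹)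
        * ENNReal.ofReal ((θs^(2*s)*Real.Gamma (2*s))⁻¹)
      = ENNReal.ofReal (((θ*θs)^(2*s) * (Real.Gamma (2*s))^2)⁻¹) := by
    rw [← ENNReal.ofReal_mul (inv_nonneg.2 (mul_nonneg (Real.rpow_nonneg hθ.le _) hΓ.le))]
    congr 1
    rw [Real.mul_rpow hθ.le hθs.le]
    ring
  have hUeq : (∫⁻ u in Ioo (0:ℝ) 1,
        ENNReal.ofReal (u^(2*s-1)*(1-u)^(2*s-1)
            * (((1-u)*θ+u*θs)^(2*s) * Real.Gamma (2*s))⁻¹)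
          * ∫⁻ z in A, ENNReal.ofReal (z^(2*s-1)
              * Real.exp (-(z * ((1-u)*θ+u*θs)⁻¹))))
      = ENNReal.ofReal (((θ*θs)^(2*s) * (Real.Gamma (2*s))^2)⁻¹) *
          ∫⁻ w in Ioo (0:ℝ) 1,
            ENNReal.ofReal (w^(2*s-1)*(1-w)^(2*s-1)
                * (Real.Gamma (2*s) / ((((1-w)*θ+w*θs)) / (θ*θs))^(2*s)))
              * ∫⁻ z in A, ENNReal.ofReal (z^(2*s-1)
                  * Real.exp (-(z * ((((1-w)*θ+w*θs)) / (θ*θs))))) :=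
    stepG (2*s) θ θs hθ hθs (Real.Gamma (2*s)) hΓ
      (fun δ => ∫⁻ z in A, ENNReal.ofReal (z^(2*s-1) * Real.exp (-(z*δ))))
  have e1 : ∀ x y : ℝ, (∫⁻ b in Ioo (0:ℝ) 1,
        (ENNReal.ofReal B⁻¹ * ENNReal.ofReal (b^(2*s-1)*(1-b)^(2*s-1)))
          * A.indicator 1 (b*(x+y)))
      = ENNReal.ofReal B⁻¹ * ∫⁻ b in Ioo (0:ℝ) 1,
          ENNReal.ofReal (b^(2*s-1)*(1-b)^(2*s-1)) * A.indicator 1 (b*(x+y)) :=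
    fun x y => pull1 _ ENNReal.ofReal_ne_top _ _
  have e2 : ∀ x : ℝ, (∫⁻ y in Ioi (0:ℝ),
        (ENNReal.ofReal ((θs^(2*s)*Real.Gamma (2*s))⁻¹)
            * ENNReal.ofReal (y^(2*s-1) * Real.exp (-y/θs)))
          * (ENNReal.ofReal B⁻¹ * ∫⁻ b in Ioo (0:ℝ) 1,
              ENNReal.ofReal (b^(2*s-1)*(1-b)^(2*s-1)) * A.indicator 1 (b*(x+y))))
      = (ENNReal.ofReal ((θs^(2*s)*Real.Gamma (2*s))⁻¹) * ENNReal.ofReal B⁻¹)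
          * ∫⁻ y in Ioi (0:ℝ), ENNReal.ofReal (y^(2*s-1) * Real.exp (-y/θs))
              * ∫⁻ b in Ioo (0:ℝ) 1,
                  ENNReal.ofReal (b^(2*s-1)*(1-b)^(2*s-1)) * A.indicator 1 (b*(x+y)) :=
    fun x => pull2 _ _ ENNReal.ofReal_ne_top ENNReal.ofReal_ne_top _ _
  calc Measure.map (fun q : ℝ × ℝ × ℝ => q.2.2 * (q.1 + q.2.1))
        ((gammaMeas s θ).prod ((gammaMeas s θs).prod (betaMeas s))) A
      = ∫⁻ x in Ioi (0:ℝ), ENNReal.ofReal (gammaDens s θ x) *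
          ∫⁻ y in Ioi (0:ℝ), ENNReal.ofReal (gammaDens s θs y) *
            ∫⁻ b in Ioo (0:ℝ) 1, ENNReal.ofReal (betaDens s b) *
              A.indicator 1 (b * (x + y)) := hstep1
    _ = (ENNReal.ofReal ((θ^(2*s)*Real.Gamma (2*s))⁻¹)
          * (ENNReal.ofReal ((θs^(2*s)*Real.Gamma (2*s))⁻¹) * ENNReal.ofReal B⁻¹))
        * ∫⁻ x in Ioi (0:ℝ), ENNReal.ofReal (x^(2*s-1) * Real.exp (-x/θ)) *
            ∫⁻ y in Ioi (0:ℝ), ENNReal.ofReal (y^(2*s-1) * Real.exp (-y/θs)) *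
              ∫⁻ b in Ioo (0:ℝ) 1,
                ENNReal.ofReal (b^(2*s-1)*(1-b)^(2*s-1)) * A.indicator 1 (b*(x+y)) := by
        simp only [hsplit1, hsplit2, hsplit3]
        simp only [e1]
        simp only [e2]
        exact pull2 _ _ ENNReal.ofReal_ne_top
          (ENNReal.mul_ne_top ENNReal.ofReal_ne_top ENNReal.ofReal_ne_top) _ _
    _ = (ENNReal.ofReal ((θ^(2*s)*Real.Gamma (2*s))⁻¹)
          * (ENNReal.ofReal ((θs^(2*s)*Real.Gamma (2*s))⁻¹) * ENNReal.ofReal B⁻¹))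
        * ∫⁻ w in Ioo (0:ℝ) 1,
            ENNReal.ofReal (w^(2*s-1)*(1-w)^(2*s-1)
                * (Real.Gamma (2*s) / ((((1-w)*θ+w*θs)) / (θ*θs))^(2*s)))
              * ∫⁻ z in A, ENNReal.ofReal (z^(2*s-1)
                  * Real.exp (-(z * ((((1-w)*θ+w*θs)) / (θ*θs))))) := by
        rw [middle (2*s) θ θs hp hθ hθs A hA hA']
    _ = ENNReal.ofReal B⁻¹ *
          ((ENNReal.ofReal ((θ^(2*s)*Real.Gamma (2*s))⁻¹)
            * ENNReal.ofReal ((θs^(2*s)*Real.Gamma (2*s))⁻¹)) *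
          ∫⁻ w in Ioo (0:ℝ) 1,
            ENNReal.ofReal (w^(2*s-1)*(1-w)^(2*s-1)
                * (Real.Gamma (2*s) / ((((1-w)*θ+w*θs)) / (θ*θs))^(2*s)))
              * ∫⁻ z in A, ENNReal.ofReal (z^(2*s-1)
                  * Real.exp (-(z * ((((1-w)*θ+w*θs)) / (θ*θs)))))) := by
        ring
    _ = ENNReal.ofReal B⁻¹ *
          ∫⁻ u in Ioo (0:ℝ) 1,
            ENNReal.ofReal (u^(2*s-1)*(1-u)^(2*s-1)
                * (((1-u)*θ+u*θs)^(2*s) * Real.Gamma (2*s))⁻¹)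
              * ∫⁻ z in A, ENNReal.ofReal (z^(2*s-1)
                  * Real.exp (-(z * ((1-u)*θ+u*θs)⁻¹))) := by
        rw [hc12, ← hUeq]
    _ = ∫⁻ u in Ioo (0:ℝ) 1,
          (∫⁻ x in A, ENNReal.ofReal (gammaDens s ((1-u)*θ+u*θs) x))
            * ENNReal.ofReal (betaDens s u) := hRHSlint.symm
    _ = ENNReal.ofReal
          (∫ u in Ioo (0:ℝ) 1,
            (∫ x in A, gammaDens s ((1-u)*θ+u*θs) x) * betaDens s u) := hRHSofReal.symm
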